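/- Let k be a continuous stationary positive semi-definite kernel on ℝ^d, i.e. k(x,x') = κ(x − x') for a continuous function κ, with variance σ² = κ(0). Let X ⊆ ℝ^d be a compact set with positive Lebesgue measure, and let x₁, x₂, … be independent random points, each uniformly distributed on X. For each N, let K_N be the N×N matrix with entries k(x_i, x_j), 1 ≤ i, j ≤ N. Then, almost surely, the smallest eigenvalue of K_N converges to 0 as N → ∞. -/

import Mathlib

open MeasureTheory Filter
open Matrix

lemma rayleigh_min' {n : ℕ} {A : Matrix (Fin n) (Fin n) ℝ} (hA : A.PosSemidef)
    (v : Fin n → ℝ) :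
    (⨅ i, hA.1.eigenvalues i) * (v ⬝ᵥ v) ≤ v ⬝ᵥ (A *ᵥ v) := by
  set c := ⨅ i, hA.1.eigenvalues i with hc
  have hle : ∀ i, c ≤ hA.1.eigenvalues i := fun i =>
    ciInf_le (Set.finite_range _).bddBelow i
  have hdiag : Matrix.PosSemidef (Matrix.diagonal (fun i => hA.1.eigenvalues i - c)) :=
    Matrix.PosSemidef.diagonal (fun i => sub_nonneg.mpr (hle i))
  set U : Matrix (Fin n) (Fin n) ℝ := (hA.1.eigenvectorUnitary : Matrix (Fin n) (Fin n) ℝ) with hU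
  have hUU : U * Uᴴ = 1 := by
    rw [← Matrix.star_eq_conjTranspose]
    exact Matrix.mem_unitaryGroup_iff.mp (hA.1.eigenvectorUnitary).2
  have hBeq : A - c • (1 : Matrix (Fin n) (Fin n) ℝ)
      = U * Matrix.diagonal (fun i => hA.1.eigenvalues i - c) * Uᴴ := by
    have hD : Matrix.diagonal (fun i => hA.1.eigenvalues i - c)
        = Matrix.diagonal (RCLike.ofReal ∘ hA.1.eigenvalues)
          - c • (1 : Matrix (Fin n) (Fin n) ℝ) := by
      rw [Matrix.smul_one_eq_diagonal, ← Matrix.diagonal_sub]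
      congr 1
    rw [hD, Matrix.mul_sub, Matrix.sub_mul, Matrix.mul_smul, Matrix.mul_one,
      Matrix.smul_mul, hUU]
    congr 1
    exact hA.1.spectral_theorem
  have hB : (A - c • (1 : Matrix (Fin n) (Fin n) ℝ)).PosSemidef := by
    rw [hBeq]
    exact hdiag.mul_mul_conjTranspose_same U
  have h2 := hB.dotProduct_mulVec_nonneg v
  simp only [star_trivial, Matrix.sub_mulVec, dotProduct_sub,
    Matrix.smul_mulVec, Matrix.one_mulVec, dotProduct_smul,
    smul_eq_mul] at h2
  linarith

lemma min_eig_le_pair {n : ℕ} {A : Matrix (Fin n) (Fin n) ℝ} (hA : A.PosSemidef)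
    {i j : Fin n} (hij : i ≠ j) :
    (⨅ l, hA.1.eigenvalues l) * 2 ≤ A i i + A j j - A i j - A j i := by
  set v : Fin n → ℝ := Pi.single i 1 - Pi.single j 1 with hv
  have h := rayleigh_min' hA v
  have hvv : v ⬝ᵥ v = 2 := by
    simp [hv, sub_dotProduct, dotProduct_sub, single_dotProduct,
      Pi.single_apply, hij, hij.symm]
    norm_num
  have hAv : v ⬝ᵥ (A *ᵥ v) = A i i + A j j - A i j - A j i := by
    simp [hv, Matrix.mulVec_sub, sub_dotProduct, dotProduct_sub,
      Matrix.mulVec_single, single_dotProduct]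
    ring
  rw [hvv, hAv] at h
  exact h


/-- Let `k(x,y) = κ(x − y)` be a continuous stationary positive
semi-definite kernel on `ℝ^d`, and let `x₁, x₂, …` be i.i.d. points uniformly distributed on
a compact set `X` of positive Lebesgue measure.  Then almost surely the smallest eigenvalue
of the kernel matrix `K_N = (k(x_i, x_j))_{i,j ≤ N}` tends to `0` as `N → ∞`. -/
theorem smallest_eigenvalue_tendsto_zero
    (d : ℕ) (κ : EuclideanSpace ℝ (Fin d) → ℝ) (hκ_cont : Continuous κ)
    (k : EuclideanSpace ℝ (Fin d) → EuclideanSpace ℝ (Fin d) → ℝ)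
    (hk_stat : ∀ x y, k x y = κ (x - y))
    (hk_psd : ∀ (n : ℕ) (y : Fin n → EuclideanSpace ℝ (Fin d)),
      (Matrix.of fun i j => k (y i) (y j)).PosSemidef)
    (X : Set (EuclideanSpace ℝ (Fin d))) (hX_compact : IsCompact X)
    (hX_pos : 0 < volume X)
    (Ω : Type*) [MeasurableSpace Ω] (P : Measure Ω) [IsProbabilityMeasure P]
    (x : ℕ → Ω → EuclideanSpace ℝ (Fin d))
    (hx_meas : ∀ i, Measurable (x i))
    (hx_indep : ProbabilityTheory.iIndepFun x P)
    (hx_unif : ∀ i, Measure.map (x i) P = (volume X)⁻¹ • volume.restrict X) :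
    ∀ᵐ ω ∂P, Tendsto
      (fun N : ℕ =>
        ⨅ i : Fin (N + 1),
          (hk_psd (N + 1) (fun i => x i ω)).1.eigenvalues i)
      atTop (nhds 0) := by
  have hXmeas : MeasurableSet X := hX_compact.isClosed.measurableSet
  -- almost surely all points lie in X
  have hae : ∀ᵐ ω ∂P, ∀ i, x i ω ∈ X := by
    rw [ae_all_iff]
    intro i
    have hmap : Measure.map (x i) P Xᶜ = 0 := by
      rw [hx_unif i]
      simp [Measure.restrict_apply hXmeas.compl, Set.compl_inter_self]
    rw [Measure.map_apply (hx_meas i) hXmeas.compl] at hmap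
    exact hmap
  filter_upwards [hae] with ω hω
  -- deterministic argument
  rw [Metric.tendsto_atTop]
  intro ε hε
  obtain ⟨δ, hδ, hδε⟩ := Metric.continuous_iff.mp hκ_cont 0 ε hε
  obtain ⟨t, htX, htfin, htcover⟩ := hX_compact.finite_cover_balls (half_pos hδ)
  refine ⟨htfin.toFinset.card, fun N hN => ?_⟩
  set A : Matrix (Fin (N + 1)) (Fin (N + 1)) ℝ :=
    Matrix.of fun i j => k (x i ω) (x j ω) with hA
  set c := ⨅ i : Fin (N + 1), (hk_psd (N + 1) (fun i => x i ω)).1.eigenvalues i with hc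
  have hc0 : 0 ≤ c :=
    le_ciInf fun i => (hk_psd (N + 1) (fun i => x i ω)).eigenvalues_nonneg i
  -- pigeonhole : two close points
  have hch : ∀ i : Fin (N + 1), ∃ z ∈ htfin.toFinset,
      x i ω ∈ Metric.ball z (δ / 2) := by
    intro i
    have := htcover (hω i)
    simp only [Set.mem_iUnion, exists_prop] at this
    obtain ⟨z, hz, hz2⟩ := this
    exact ⟨z, htfin.mem_toFinset.mpr hz, hz2⟩
  choose f hf1 hf2 using hch
  obtain ⟨i, -, j, -, hij, hfij⟩ :=
    Finset.exists_ne_map_eq_of_card_lt_of_maps_to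
      (s := (Finset.univ : Finset (Fin (N + 1)))) (t := htfin.toFinset)
      (by simpa using Nat.lt_succ_of_le hN) (fun a _ => hf1 a)
  have hdist : dist (x i ω) (x j ω) < δ := by
    calc dist (x i ω) (x j ω) ≤ dist (x i ω) (f i) + dist (f i) (x j ω) := dist_triangle _ _ _
    _ < δ / 2 + δ / 2 := by
        refine add_lt_add (Metric.mem_ball.mp (hf2 i)) ?_
        rw [dist_comm, hfij]
        exact Metric.mem_ball.mp (hf2 j)
    _ = δ := add_halves δ
  -- bound c
  have hκd : dist (κ (x i ω - x j ω)) (κ 0) < ε := by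
    apply hδε
    rw [dist_zero_right, ← dist_eq_norm]
    exact hdist
  have hbound := min_eig_le_pair (hk_psd (N + 1) (fun i => x i ω)) hij
  have hAii : A i i = κ 0 := by simp [hA, hk_stat, Matrix.of_apply, sub_self]
  have hAjj : A j j = κ 0 := by simp [hA, hk_stat, Matrix.of_apply, sub_self]
  have hAij : A i j = κ (x i ω - x j ω) := by simp [hA, hk_stat]
  have hAji : A j i = A i j := by
    have h := (hk_psd (N + 1) (fun i => x i ω)).1.apply j i
    simpa [hA] using h.symm
  have hκ0 : κ 0 - κ (x i ω - x j ω) < ε := by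
    have habs := abs_lt.mp (by rwa [Real.dist_eq] at hκd)
    linarith [habs.1]
  have hcle : c * 2 ≤ 2 * (κ 0 - κ (x i ω - x j ω)) := by
    have h2 : A i i + A j j - A i j - A j i = 2 * (κ 0 - κ (x i ω - x j ω)) := by
      rw [hAji, hAii, hAjj, hAij]; ring
    calc c * 2 ≤ A i i + A j j - A i j - A j i := hbound
    _ = 2 * (κ 0 - κ (x i ω - x j ω)) := h2
  rw [Real.dist_eq, sub_zero, abs_of_nonneg hc0]
  linarith
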